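/- Let f : ℕ → ℝ≥0 be nondecreasing and let 𝓕 be a family of finite graphs closed under subgraphs such that every graph in 𝓕 with m vertices, under every weighting of its vertices by nonnegative reals, has a separation (A,B) with |A ∩ B| ≤ f(m) and each of w(A∖B), w(B∖A) at most (2/3) of the total weight. Then for every n-vertex graph G ∈ 𝓕 and every pair of weightings w_1, w_2 : V(G) → ℝ≥0 there exists a set X ⊆ V(G) with |X| ≤ 2·f(n) and a partition of V(G) ∖ X into three (possibly empty) sets T_1, T_2, T_3 such that no edge of G joins two distinct sets T_i, T_j, and for each i ∈ {1,2,3} both w_1(T_i) ≤ (2/3)·w_1(V(G)) and w_2(T_i) ≤ (2/3)·w_2(V(G)). -/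

import Mathlib

/-- An `H`-model in `G`: a family of pairwise disjoint nonempty vertex subsets of `G`,
each inducing a connected subgraph of `G`, such that for every edge `uv` of `H` there is
an edge of `G` with one endpoint in `X u` and the other in `X v`. -/
def SimpleGraph.HasModel {α β : Type} (G : SimpleGraph α) (H : SimpleGraph β) : Prop :=
  ∃ X : β → Set α,
    (∀ b, (X b).Nonempty) ∧
    (Pairwise fun b b' => Disjoint (X b) (X b')) ∧
    (∀ b, ((G.induce (X b)).Connected)) ∧
    (∀ b b', H.Adj b b' → ∃ x ∈ X b, ∃ y ∈ X b', G.Adj x y)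

/-- `(A, B)` is a separation of `G`: `A ∪ B` is the whole vertex set and no edge of `G`
joins `A \ B` to `B \ A`. -/
def SimpleGraph.IsSeparation {α : Type} (G : SimpleGraph α) (A B : Set α) : Prop :=
  A ∪ B = Set.univ ∧ ∀ x y : α, G.Adj x y → x ∈ A \ B → y ∈ B \ A → False

section helpers

variable {n : ℕ}

lemma sum_mem_mono (w : Fin n → ℝ) (hw : ∀ x, 0 ≤ w x) {s t : Set (Fin n)} (hst : s ⊆ t) :
    (∑ᶠ x ∈ s, w x) ≤ ∑ᶠ x ∈ t, w x := by
  rw [finsum_mem_eq_finite_toFinset_sum _ s.toFinite,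
    finsum_mem_eq_finite_toFinset_sum _ t.toFinite]
  exact Finset.sum_le_sum_of_subset_of_nonneg (by simpa using hst) (fun i _ _ => hw i)

lemma sum_mem_le_total (w : Fin n → ℝ) (hw : ∀ x, 0 ≤ w x) (s : Set (Fin n)) :
    (∑ᶠ x ∈ s, w x) ≤ ∑ᶠ x, w x := by
  rw [← finsum_mem_univ w]
  exact sum_mem_mono w hw (Set.subset_univ s)

lemma sum_mem_nonneg (w : Fin n → ℝ) (hw : ∀ x, 0 ≤ w x) (s : Set (Fin n)) :
    0 ≤ ∑ᶠ x ∈ s, w x := by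
  rw [finsum_mem_eq_finite_toFinset_sum _ s.toFinite]
  exact Finset.sum_nonneg fun i _ => hw i

lemma sep_symm {G : SimpleGraph (Fin n)} {A B : Set (Fin n)}
    (hAB : G.IsSeparation A B) : G.IsSeparation B A :=
  ⟨by rw [Set.union_comm]; exact hAB.1, fun x y hxy hx hy => hAB.2 y x hxy.symm hy hx⟩

end helpers

theorem stmt8_aux (f : ℕ → ℝ) (hf0 : ∀ m, 0 ≤ f m) (hfmono : Monotone f)
    (P : ∀ {m : ℕ}, SimpleGraph (Fin m) → Prop)
    (hclosed : ∀ {m m' : ℕ} (G : SimpleGraph (Fin m)) (G' : SimpleGraph (Fin m')),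
      P G → (∃ e : Fin m' ↪ Fin m, ∀ a b, G'.Adj a b → G.Adj (e a) (e b)) → P G')
    (hsep : ∀ {m : ℕ} (G : SimpleGraph (Fin m)), P G →
      ∀ w : Fin m → ℝ, (∀ x, 0 ≤ w x) →
        ∃ A B : Set (Fin m), G.IsSeparation A B ∧
          ((A ∩ B).ncard : ℝ) ≤ f m ∧
          (∑ᶠ x ∈ A \ B, w x) ≤ (2 / 3) * ∑ᶠ x, w x ∧
          (∑ᶠ x ∈ B \ A, w x) ≤ (2 / 3) * ∑ᶠ x, w x)
    (n : ℕ) (G : SimpleGraph (Fin n)) (hG : P G)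
    (w₁ w₂ : Fin n → ℝ) (hw₁ : ∀ x, 0 ≤ w₁ x) (hw₂ : ∀ x, 0 ≤ w₂ x)
    (A B : Set (Fin n)) (hAB : G.IsSeparation A B)
    (hcard : ((A ∩ B).ncard : ℝ) ≤ f n)
    (h1 : (∑ᶠ x ∈ A \ B, w₁ x) ≤ (2 / 3) * ∑ᶠ x, w₁ x)
    (h1' : (∑ᶠ x ∈ B \ A, w₁ x) ≤ (2 / 3) * ∑ᶠ x, w₁ x)
    (h2 : (∑ᶠ x ∈ B \ A, w₂ x) ≤ (2 / 3) * ∑ᶠ x, w₂ x) :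
    ∃ (X : Set (Fin n)) (T : Fin 3 → Set (Fin n)),
      ((X.ncard : ℝ) ≤ 2 * f n) ∧
      (⋃ i, T i) = Set.univ \ X ∧
      (Pairwise fun i j => Disjoint (T i) (T j)) ∧
      (∀ i j : Fin 3, i ≠ j → ∀ x ∈ T i, ∀ y ∈ T j, ¬ G.Adj x y) ∧
      (∀ i, (∑ᶠ x ∈ T i, w₁ x) ≤ (2 / 3) * ∑ᶠ x, w₁ x) ∧
      (∀ i, (∑ᶠ x ∈ T i, w₂ x) ≤ (2 / 3) * ∑ᶠ x, w₂ x) := by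
  classical
  set C : Set (Fin n) := A \ B with hC
  haveI : Fintype ↥C := Fintype.ofFinite ↥C
  set m := Fintype.card ↥C with hm
  set e : ↥C ≃ Fin m := Fintype.equivFin ↥C with he
  set emb : Fin m → Fin n := fun i => ((e.symm i : ↥C) : Fin n) with hemb
  have hinj : Function.Injective emb := fun a b h =>
    e.symm.injective (Subtype.ext h)
  have hrange : Set.range emb = C := by
    have : Set.range emb = Subtype.val '' Set.range e.symm := by
      rw [← Set.range_comp]; rfl
    rw [this, e.symm.range_eq_univ, Set.image_univ, Subtype.range_val]
  have hmn : m ≤ n := by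
    calc m ≤ Fintype.card (Fin n) :=
          Fintype.card_le_of_injective (Subtype.val : ↥C → Fin n) Subtype.val_injective
      _ = n := Fintype.card_fin n
  set G' : SimpleGraph (Fin m) := G.comap emb with hG'
  have hPG' : P G' := hclosed G G' hG ⟨⟨emb, hinj⟩, fun a b h => h⟩
  obtain ⟨A', B', hsep', hcard', hwa', hwb'⟩ := hsep G' hPG' (w₂ ∘ emb) (fun x => hw₂ _)
  -- total weight over C
  have hsumC : (∑ᶠ a, w₂ (emb a)) = ∑ᶠ x ∈ C, w₂ x := by
    rw [← hrange, finsum_mem_range hinj]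
  have hCtot : (∑ᶠ x ∈ C, w₂ x) ≤ ∑ᶠ x, w₂ x := sum_mem_le_total w₂ hw₂ C
  refine ⟨(A ∩ B) ∪ emb '' (A' ∩ B'), ![emb '' (A' \ B'), emb '' (B' \ A'), B \ A],
    ?_, ?_, ?_, ?_, ?_, ?_⟩
  · calc (((A ∩ B) ∪ emb '' (A' ∩ B')).ncard : ℝ)
        ≤ ((A ∩ B).ncard + (emb '' (A' ∩ B')).ncard : ℕ) := by
          exact_mod_cast Set.ncard_union_le _ _
      _ = ((A ∩ B).ncard : ℝ) + ((A' ∩ B').ncard : ℝ) := by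
          rw [Set.ncard_image_of_injective _ hinj]; push_cast; ring
      _ ≤ f n + f m := add_le_add hcard hcard'
      _ ≤ f n + f n := add_le_add_right (hfmono hmn) _
      _ = 2 * f n := by ring
  · ext x
    simp only [Set.mem_iUnion, Set.mem_diff, Set.mem_univ, true_and, Set.mem_union]
    constructor
    · rintro ⟨i, hi⟩
      fin_cases i <;> simp only [Matrix.cons_val_zero, Matrix.cons_val_one, Matrix.head_cons,
        Matrix.cons_val_two, Matrix.tail_cons] at hi
      · obtain ⟨a, ha, rfl⟩ := hi
        have hc : emb a ∈ C := by rw [← hrange]; exact Set.mem_range_self a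
        push_neg
        refine ⟨fun h => hc.2 h.2, ?_⟩
        rintro ⟨b, hb, hba⟩
        exact ha.2 (hinj hba ▸ hb).2
      · obtain ⟨a, ha, rfl⟩ := hi
        have hc : emb a ∈ C := by rw [← hrange]; exact Set.mem_range_self a
        push_neg
        refine ⟨fun h => hc.2 h.2, ?_⟩
        rintro ⟨b, hb, hba⟩
        exact ha.2 (hinj hba ▸ hb).1
      · push_neg
        refine ⟨fun h => hi.2 h.1, ?_⟩
        rintro ⟨b, hb, hba⟩
        have hc : emb b ∈ C := by rw [← hrange]; exact Set.mem_range_self b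
        exact hc.2 (hba ▸ hi.1)
    · rintro hx
      push_neg at hx
      obtain ⟨hxS, hxS'⟩ := hx
      by_cases hxC : x ∈ C
      · have hxr : x ∈ Set.range emb := by rw [hrange]; exact hxC
        obtain ⟨a, rfl⟩ := hxr
        have hab : a ∈ A' ∪ B' := hsep'.1 ▸ Set.mem_univ a
        have hnotI : a ∉ A' ∩ B' := fun h => hxS' ⟨a, h, rfl⟩
        rcases hab with ha | hb
        · exact ⟨0, ⟨a, ⟨ha, fun hb => hnotI ⟨ha, hb⟩⟩, rfl⟩⟩
        · exact ⟨1, ⟨a, ⟨hb, fun ha => hnotI ⟨ha, hb⟩⟩, rfl⟩⟩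
      · have hxAB : x ∈ A ∪ B := hAB.1 ▸ Set.mem_univ x
        refine ⟨2, ?_⟩
        simp only [Matrix.cons_val_two, Matrix.tail_cons, Matrix.head_cons]
        rcases hxAB with ha | hb
        · rcases (em (x ∈ B)) with h | h
          · exact absurd ⟨ha, h⟩ hxS
          · exact absurd ⟨ha, h⟩ hxC
        · rcases (em (x ∈ A)) with h | h
          · exact absurd ⟨h, hb⟩ hxS
          · exact ⟨hb, h⟩
  · have hT0C : emb '' (A' \ B') ⊆ C := by
      rw [← hrange]; exact Set.image_subset_range _ _
    have hT1C : emb '' (B' \ A') ⊆ C := by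
      rw [← hrange]; exact Set.image_subset_range _ _
    have d01 : Disjoint (emb '' (A' \ B')) (emb '' (B' \ A')) :=
      (Set.disjoint_image_iff hinj).mpr disjoint_sdiff_sdiff
    have dCD : Disjoint C (B \ A) := disjoint_sdiff_sdiff
    have d02 : Disjoint (emb '' (A' \ B')) (B \ A) := dCD.mono_left hT0C
    have d12 : Disjoint (emb '' (B' \ A')) (B \ A) := dCD.mono_left hT1C
    intro i j hij
    fin_cases i <;> fin_cases j <;>
      simp only [Matrix.cons_val_zero, Matrix.cons_val_one, Matrix.head_cons,
        Matrix.cons_val_two, Matrix.tail_cons] <;>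
      first
        | exact absurd rfl hij
        | exact d01 | exact d01.symm | exact d02 | exact d02.symm
        | exact d12 | exact d12.symm
  · have n01 : ∀ x ∈ emb '' (A' \ B'), ∀ y ∈ emb '' (B' \ A'), ¬ G.Adj x y := by
      rintro x ⟨a, ha, rfl⟩ y ⟨b, hb, rfl⟩ hadj
      exact hsep'.2 a b hadj ha hb
    have n02 : ∀ x ∈ emb '' (A' \ B'), ∀ y ∈ B \ A, ¬ G.Adj x y := by
      rintro x ⟨a, ha, rfl⟩ y hy hadj
      have : emb a ∈ C := by rw [← hrange]; exact Set.mem_range_self a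
      exact hAB.2 _ _ hadj this hy
    have n12 : ∀ x ∈ emb '' (B' \ A'), ∀ y ∈ B \ A, ¬ G.Adj x y := by
      rintro x ⟨a, ha, rfl⟩ y hy hadj
      have : emb a ∈ C := by rw [← hrange]; exact Set.mem_range_self a
      exact hAB.2 _ _ hadj this hy
    intro i j hij
    fin_cases i <;> fin_cases j <;>
      simp only [Matrix.cons_val_zero, Matrix.cons_val_one, Matrix.head_cons,
        Matrix.cons_val_two, Matrix.tail_cons] <;>
      first
        | exact absurd rfl hij
        | exact n01 | exact n02 | exact n12
        | exact fun x hx y hy h => n01 y hy x hx h.symm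
        | exact fun x hx y hy h => n02 y hy x hx h.symm
        | exact fun x hx y hy h => n12 y hy x hx h.symm
  · have hT0C : emb '' (A' \ B') ⊆ C := by
      rw [← hrange]; exact Set.image_subset_range _ _
    have hT1C : emb '' (B' \ A') ⊆ C := by
      rw [← hrange]; exact Set.image_subset_range _ _
    intro i
    fin_cases i <;>
      simp only [Matrix.cons_val_zero, Matrix.cons_val_one, Matrix.head_cons,
        Matrix.cons_val_two, Matrix.tail_cons]
    · exact le_trans (sum_mem_mono w₁ hw₁ hT0C) h1
    · exact le_trans (sum_mem_mono w₁ hw₁ hT1C) h1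
    · exact h1'
  · have key : ∀ s : Set (Fin m), (∑ᶠ x ∈ s, (w₂ ∘ emb) x) ≤ (2/3) * ∑ᶠ a, (w₂ ∘ emb) a →
        (∑ᶠ x ∈ emb '' s, w₂ x) ≤ (2/3) * ∑ᶠ x, w₂ x := by
      intro s hs
      have h1 : (∑ᶠ x ∈ emb '' s, w₂ x) = ∑ᶠ x ∈ s, (w₂ ∘ emb) x :=
        finsum_mem_image (hinj.injOn)
      have h2 : (∑ᶠ a, (w₂ ∘ emb) a) = ∑ᶠ x ∈ C, w₂ x := hsumC
      rw [h1]
      refine le_trans hs ?_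
      rw [h2]
      exact mul_le_mul_of_nonneg_left hCtot (by norm_num)
    intro i
    fin_cases i <;>
      simp only [Matrix.cons_val_zero, Matrix.cons_val_one, Matrix.head_cons,
        Matrix.cons_val_two, Matrix.tail_cons]
    · exact key _ hwa'
    · exact key _ hwb'
    · exact h2



/-- Let `f : ℕ → ℝ≥0` be nondecreasing and let `𝓕` (here the predicate `P`)
be a family of finite graphs closed under subgraphs such that every `m`-vertex member,
under every nonnegative vertex weighting, has a separation with separator of size at most
`f m` and each side of weight at most `2/3` of the total.  Then every `n`-vertex `G ∈ 𝓕`,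
with any two nonnegative weightings `w₁, w₂`, admits a set `X` of at most `2·f n` vertices
and a partition of `V(G) \ X` into three (possibly empty) sets `T 0, T 1, T 2` with no edge
of `G` joining two distinct sets, and with `w₁(T i) ≤ (2/3)·w₁(V)` and
`w₂(T i) ≤ (2/3)·w₂(V)` for each `i`. -/
theorem stmt8 (f : ℕ → ℝ) (hf0 : ∀ m, 0 ≤ f m) (hfmono : Monotone f)
    (P : ∀ {m : ℕ}, SimpleGraph (Fin m) → Prop)
    (hclosed : ∀ {m m' : ℕ} (G : SimpleGraph (Fin m)) (G' : SimpleGraph (Fin m')),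
      P G → (∃ e : Fin m' ↪ Fin m, ∀ a b, G'.Adj a b → G.Adj (e a) (e b)) → P G')
    (hsep : ∀ {m : ℕ} (G : SimpleGraph (Fin m)), P G →
      ∀ w : Fin m → ℝ, (∀ x, 0 ≤ w x) →
        ∃ A B : Set (Fin m), G.IsSeparation A B ∧
          ((A ∩ B).ncard : ℝ) ≤ f m ∧
          (∑ᶠ x ∈ A \ B, w x) ≤ (2 / 3) * ∑ᶠ x, w x ∧
          (∑ᶠ x ∈ B \ A, w x) ≤ (2 / 3) * ∑ᶠ x, w x)
    (n : ℕ) (G : SimpleGraph (Fin n)) (hG : P G)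
    (w₁ w₂ : Fin n → ℝ) (hw₁ : ∀ x, 0 ≤ w₁ x) (hw₂ : ∀ x, 0 ≤ w₂ x) :
    ∃ (X : Set (Fin n)) (T : Fin 3 → Set (Fin n)),
      ((X.ncard : ℝ) ≤ 2 * f n) ∧
      (⋃ i, T i) = Set.univ \ X ∧
      (Pairwise fun i j => Disjoint (T i) (T j)) ∧
      (∀ i j : Fin 3, i ≠ j → ∀ x ∈ T i, ∀ y ∈ T j, ¬ G.Adj x y) ∧
      (∀ i, (∑ᶠ x ∈ T i, w₁ x) ≤ (2 / 3) * ∑ᶠ x, w₁ x) ∧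
      (∀ i, (∑ᶠ x ∈ T i, w₂ x) ≤ (2 / 3) * ∑ᶠ x, w₂ x) := by
  obtain ⟨A, B, hAB, hcard, h1, h1'⟩ := hsep G hG w₁ hw₁
  by_cases hc : (∑ᶠ x ∈ B \ A, w₂ x) ≤ (2 / 3) * ∑ᶠ x, w₂ x
  · exact stmt8_aux f hf0 hfmono P hclosed hsep n G hG w₁ w₂ hw₁ hw₂ A B hAB hcard h1 h1' hc
  · push_neg at hc
    have hdisj : Disjoint (A \ B) (B \ A) := disjoint_sdiff_sdiff
    have hsum : (∑ᶠ x ∈ A \ B, w₂ x) + (∑ᶠ x ∈ B \ A, w₂ x) ≤ ∑ᶠ x, w₂ x := by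
      rw [← finsum_mem_union hdisj (Set.toFinite _) (Set.toFinite _)]
      exact sum_mem_le_total w₂ hw₂ _
    have hW : (0:ℝ) ≤ ∑ᶠ x, w₂ x := by
      rw [← finsum_mem_univ]; exact sum_mem_nonneg w₂ hw₂ _
    have hc' : (∑ᶠ x ∈ A \ B, w₂ x) ≤ (2 / 3) * ∑ᶠ x, w₂ x := by linarith
    exact stmt8_aux f hf0 hfmono P hclosed hsep n G hG w₁ w₂ hw₁ hw₂ B A (sep_symm hAB)
      (by rw [Set.inter_comm]; exact hcard) h1' h1 hc'
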